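/- arXiv:1510.02502 — 2 statements merged into one kernel-verified Lean document; each statement's English description precedes it below -/
import Mathlib

section
/- The bias of the smoothed persistence intensity estimator satisfies $\mathbb{E}(\hat{\kappa}_\tau(x,y)) - \kappa_P(x,y) = \frac{\mu_2}{2}\, \Delta \kappa_P(x,y)\, \tau^2 + o(\tau^2)$ as $\tau \to 0$, where $\mu_2 = \int a^2 K(a)\,da$ and $\Delta$ is the Laplacian. -/
open MeasureTheory Filter Real Set
open scoped Topology ProbabilityTheory

set_option maxHeartbeats 1600000 in
/-- bias expansion of the smoothed persistence intensity estimator. -/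
theorem stmt_4 {Ω : Type*} [MeasureSpace Ω] [IsProbabilityMeasure (ℙ : Measure Ω)]
    (Kn : Ω → ℕ) (b d : Ω → ℕ → ℝ) (κP : ℝ → ℝ → ℝ) (K : ℝ → ℝ) (x y μ2 : ℝ)
    (hKsymm : ∀ a, K (-a) = K a)
    (hKsm : ContDiff ℝ 2 K)
    (hKbdd : ∃ M, ∀ a, |K a| ≤ M)
    (hKint : Integrable K)
    (hKnorm : (∫ a, K a) = 1)
    (hK2int : Integrable fun a => a ^ 2 * K a)
    (hμ2 : μ2 = ∫ a, a ^ 2 * K a)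
    (hκ_sm : ContDiff ℝ 2 (Function.uncurry κP))
    (hκ_bdd : ∀ n ≤ 2, ∃ M, ∀ p : ℝ × ℝ, ‖iteratedFDeriv ℝ n (Function.uncurry κP) p‖ ≤ M)
    (hκ_uc : UniformContinuous fun p : ℝ × ℝ => iteratedFDeriv ℝ 2 (Function.uncurry κP) p)
    (hκ_int : Integrable (Function.uncurry κP))
    (hid : ∀ h : ℝ → ℝ → ℝ, Continuous (Function.uncurry h) → (∃ M, ∀ s t, |h s t| ≤ M) →
      (∫ ω, ∑ j ∈ Finset.range (Kn ω), (d ω j - b ω j) * h (b ω j) (d ω j))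
        = ∫ p : ℝ × ℝ, h p.1 p.2 * κP p.1 p.2) :
    (fun τ : ℝ =>
        (∫ ω, ∑ j ∈ Finset.range (Kn ω),
            (d ω j - b ω j) * ((1 / τ ^ 2) * K ((x - b ω j) / τ) * K ((y - d ω j) / τ)))
          - κP x y
          - μ2 / 2 * (deriv (deriv fun s => κP s y) x + deriv (deriv fun t => κP x t) y) * τ ^ 2)
      =o[𝓝[>] 0] fun τ => τ ^ 2 := by
  obtain ⟨M0, hM0⟩ := hκ_bdd 0 (by norm_num)
  obtain ⟨M1, hM1⟩ := hκ_bdd 1 (by norm_num)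
  obtain ⟨M2, hM2⟩ := hκ_bdd 2 (by norm_num)
  obtain ⟨MK, hMK⟩ := hKbdd
  set φ : ℝ × ℝ → ℝ := Function.uncurry κP with hφdef
  set p₀ : ℝ × ℝ := (x, y) with hp₀def
  have hKc : Continuous K := hKsm.continuous
  have hφc : Continuous φ := hκ_sm.continuous
  have hφd : Differentiable ℝ φ := hκ_sm.differentiable (by norm_num)
  have hDφ_sm : ContDiff ℝ 1 (fderiv ℝ φ) := hκ_sm.fderiv_right (by norm_num)
  have hDφc : Continuous (fderiv ℝ φ) := hDφ_sm.continuous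
  have hDφd : Differentiable ℝ (fderiv ℝ φ) := hDφ_sm.differentiable (by norm_num)
  have hSc : Continuous (fderiv ℝ (fderiv ℝ φ)) := hDφ_sm.continuous_fderiv (by norm_num)
  -- norm bounds
  have hφ_bd : ∀ p, ‖φ p‖ ≤ M0 := fun p => by
    have := hM0 p; rwa [norm_iteratedFDeriv_zero] at this
  have hDφ_bd : ∀ p, ‖fderiv ℝ φ p‖ ≤ M1 := fun p => by
    have h := hM1 p
    have e : ‖fderiv ℝ φ p‖ = ‖iteratedFDeriv ℝ 1 φ p‖ := by
      rw [← norm_iteratedFDeriv_fderiv (n := 0), norm_iteratedFDeriv_zero]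
    rw [e]; exact h
  have hS_bd : ∀ p, ‖fderiv ℝ (fderiv ℝ φ) p‖ ≤ M2 := fun p => by
    have h := hM2 p
    have e : ‖fderiv ℝ (fderiv ℝ φ) p‖ = ‖iteratedFDeriv ℝ 2 φ p‖ := by
      rw [← norm_iteratedFDeriv_zero (𝕜 := ℝ) (f := fderiv ℝ (fderiv ℝ φ)) (x := p),
        norm_iteratedFDeriv_fderiv, norm_iteratedFDeriv_fderiv]
    rw [e]; exact h
  have hM1nn : 0 ≤ M1 := le_trans (norm_nonneg _) (hDφ_bd p₀)
  have hM2nn : 0 ≤ M2 := le_trans (norm_nonneg (fderiv ℝ (fderiv ℝ φ) p₀)) (hS_bd p₀)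
  have hM0nn : 0 ≤ M0 := le_trans (norm_nonneg _) (hφ_bd p₀)
  -- curve derivatives
  have hγ : ∀ (q : ℝ × ℝ) (τ : ℝ), HasDerivAt (fun t : ℝ => p₀ - t • q) (-q) τ := by
    intro q τ
    simpa using ((hasDerivAt_id τ).smul_const q).const_sub p₀
  have hcurve0 : ∀ (q : ℝ × ℝ) (τ : ℝ),
      HasDerivAt (fun t => φ (p₀ - t • q)) (-(fderiv ℝ φ (p₀ - τ • q) q)) τ := by
    intro q τ
    have := (hφd (p₀ - τ • q)).hasFDerivAt.comp_hasDerivAt τ (hγ q τ)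
    simpa [Function.comp_def] using this
  have hcurve1 : ∀ (q : ℝ × ℝ) (τ : ℝ),
      HasDerivAt (fun t => -(fderiv ℝ φ (p₀ - t • q) q))
        (fderiv ℝ (fderiv ℝ φ) (p₀ - τ • q) q q) τ := by
    intro q τ
    have h2 := (hDφd (p₀ - τ • q)).hasFDerivAt.comp_hasDerivAt τ (hγ q τ)
    have h3 := h2.clm_apply (hasDerivAt_const τ q)
    have h4 := h3.neg
    simpa [Function.comp_def, Pi.neg_def] using h4
  -- integrability toolbox
  have hK1int : Integrable (fun a => a * K a) := by
    refine (hKint.norm.add hK2int.norm).mono'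
      ((continuous_id.mul hKc).aestronglyMeasurable) ?_
    filter_upwards with a
    simp only [Real.norm_eq_abs, abs_mul, Pi.add_apply]
    nlinarith [abs_nonneg (K a), abs_nonneg a, sq_nonneg (|a| - 1), sq_abs a,
      abs_of_nonneg (sq_nonneg a)]
  have hprodInt : ∀ f g : ℝ → ℝ, Integrable f → Integrable g →
      Integrable (fun q : ℝ × ℝ => f q.1 * g q.2) := by
    intro f g hf hg; rw [Measure.volume_eq_prod]; exact hf.mul_prod hg
  have hprodEq : ∀ f g : ℝ → ℝ, (∫ q : ℝ × ℝ, f q.1 * g q.2) = (∫ a, f a) * ∫ a, g a := by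
    intro f g; rw [Measure.volume_eq_prod]; exact integral_prod_mul f g
  have hKodd : (∫ a, a * K a) = 0 := by
    have h := integral_neg_eq_self (fun a => a * K a) (volume : Measure ℝ)
    simp only [hKsymm, neg_mul, integral_neg] at h
    linarith
  set W : ℝ × ℝ → ℝ := fun q => K q.1 * K q.2 with hWdef
  have hWc : Continuous W := (hKc.comp continuous_fst).mul (hKc.comp continuous_snd)
  have hWint : Integrable W := hprodInt K K hKint hKint
  have hnorm_le : ∀ q : ℝ × ℝ, ‖q‖ ≤ |q.1| + |q.2| := by
    intro q
    rw [Prod.norm_def]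
    apply max_le
    · simpa [Real.norm_eq_abs] using le_add_of_nonneg_right (abs_nonneg q.2)
    · simpa [Real.norm_eq_abs] using le_add_of_nonneg_left (abs_nonneg q.1)
  -- bounds
  set bd1 : ℝ × ℝ → ℝ :=
    fun q => M1 * (|q.1 * K q.1| * |K q.2| + |K q.1| * |q.2 * K q.2|) with hbd1def
  have hbd1int : Integrable bd1 :=
    ((hprodInt _ _ hK1int.abs hKint.abs).add (hprodInt _ _ hKint.abs hK1int.abs)).const_mul M1
  have hbound1 : ∀ (q p : ℝ × ℝ), ‖W q * -(fderiv ℝ φ p q)‖ ≤ bd1 q := by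
    intro q p
    have h1 : ‖fderiv ℝ φ p q‖ ≤ M1 * ‖q‖ :=
      le_trans ((fderiv ℝ φ p).le_opNorm q)
        (mul_le_mul_of_nonneg_right (hDφ_bd p) (norm_nonneg q))
    calc ‖W q * -(fderiv ℝ φ p q)‖ = |W q| * ‖fderiv ℝ φ p q‖ := by
          rw [norm_mul, norm_neg, Real.norm_eq_abs]
      _ ≤ |W q| * (M1 * (|q.1| + |q.2|)) :=
          mul_le_mul_of_nonneg_left
            (h1.trans (mul_le_mul_of_nonneg_left (hnorm_le q) hM1nn)) (abs_nonneg _)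
      _ = bd1 q := by
          simp only [hbd1def, hWdef, abs_mul]; ring
  set bd2 : ℝ × ℝ → ℝ := fun q =>
    M2 * (|q.1 ^ 2 * K q.1| * |K q.2| + 2 * (|q.1 * K q.1| * |q.2 * K q.2|)
      + |K q.1| * |q.2 ^ 2 * K q.2|) with hbd2def
  have hbd2int : Integrable bd2 :=
    (((hprodInt _ _ hK2int.abs hKint.abs).add
      ((hprodInt _ _ hK1int.abs hK1int.abs).const_mul 2)).add
      (hprodInt _ _ hKint.abs hK2int.abs)).const_mul M2
  have hbound2 : ∀ (q p : ℝ × ℝ), ‖W q * (fderiv ℝ (fderiv ℝ φ) p q q)‖ ≤ bd2 q := by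
    intro q p
    have h0 : ‖fderiv ℝ (fderiv ℝ φ) p q q‖ ≤ M2 * ‖q‖ * ‖q‖ := by
      calc ‖fderiv ℝ (fderiv ℝ φ) p q q‖ ≤ ‖fderiv ℝ (fderiv ℝ φ) p q‖ * ‖q‖ :=
            (fderiv ℝ (fderiv ℝ φ) p q).le_opNorm q
        _ ≤ (‖fderiv ℝ (fderiv ℝ φ) p‖ * ‖q‖) * ‖q‖ :=
            mul_le_mul_of_nonneg_right ((fderiv ℝ (fderiv ℝ φ) p).le_opNorm q) (norm_nonneg q)
        _ ≤ M2 * ‖q‖ * ‖q‖ := by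
            have := hS_bd p
            gcongr
    have h1 : M2 * ‖q‖ * ‖q‖ ≤ M2 * ((|q.1| + |q.2|) * (|q.1| + |q.2|)) := by
      rw [mul_assoc]
      refine mul_le_mul_of_nonneg_left ?_ hM2nn
      exact mul_le_mul (hnorm_le q) (hnorm_le q) (norm_nonneg q) (by positivity)
    calc ‖W q * (fderiv ℝ (fderiv ℝ φ) p q q)‖
        = |W q| * ‖fderiv ℝ (fderiv ℝ φ) p q q‖ := by rw [norm_mul, Real.norm_eq_abs]
      _ ≤ |W q| * (M2 * ((|q.1| + |q.2|) * (|q.1| + |q.2|))) :=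
          mul_le_mul_of_nonneg_left (h0.trans h1) (abs_nonneg _)
      _ = bd2 q := by
          simp only [hbd2def, hWdef, abs_mul, abs_pow]
          nlinarith [sq_abs q.1, sq_abs q.2, abs_nonneg (K q.1), abs_nonneg (K q.2)]
  -- G and its derivatives
  set G : ℝ → ℝ := fun τ => ∫ q : ℝ × ℝ, W q * φ (p₀ - τ • q) with hGdef
  set G1 : ℝ → ℝ := fun τ => ∫ q : ℝ × ℝ, W q * -(fderiv ℝ φ (p₀ - τ • q) q) with hG1def
  have hcmap : ∀ τ : ℝ, Continuous fun q : ℝ × ℝ => p₀ - τ • q := fun τ =>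
    continuous_const.sub (continuous_id.const_smul τ)
  have hmeas0 : ∀ τ : ℝ, AEStronglyMeasurable (fun q : ℝ × ℝ => W q * φ (p₀ - τ • q)) volume :=
    fun τ => (hWc.mul (hφc.comp (hcmap τ))).aestronglyMeasurable
  have hmeas1 : ∀ τ : ℝ,
      AEStronglyMeasurable (fun q : ℝ × ℝ => W q * -(fderiv ℝ φ (p₀ - τ • q) q)) volume :=
    fun τ => (hWc.mul (((hDφc.comp (hcmap τ)).clm_apply continuous_id).neg)).aestronglyMeasurable
  have hmeas2 : ∀ τ : ℝ,
      AEStronglyMeasurable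
        (fun q : ℝ × ℝ => W q * (fderiv ℝ (fderiv ℝ φ) (p₀ - τ • q) q q)) volume :=
    fun τ => (hWc.mul (((hSc.comp (hcmap τ)).clm_apply continuous_id).clm_apply
      continuous_id)).aestronglyMeasurable
  have hint0 : ∀ τ : ℝ, Integrable (fun q : ℝ × ℝ => W q * φ (p₀ - τ • q)) := by
    intro τ
    refine (hWint.abs.const_mul M0).mono' (hmeas0 τ) ?_
    filter_upwards with q
    rw [norm_mul, Real.norm_eq_abs (W q), mul_comm M0]
    exact mul_le_mul_of_nonneg_left (hφ_bd _) (abs_nonneg _)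
  have hint1 : ∀ τ : ℝ, Integrable (fun q : ℝ × ℝ => W q * -(fderiv ℝ φ (p₀ - τ • q) q)) := by
    intro τ
    exact hbd1int.mono' (hmeas1 τ) (Filter.Eventually.of_forall fun q => hbound1 q _)
  have hGderiv : ∀ τ₀ : ℝ, HasDerivAt G (G1 τ₀) τ₀ := by
    intro τ₀
    have H := hasDerivAt_integral_of_dominated_loc_of_deriv_le (μ := volume)
      (F := fun τ (q : ℝ × ℝ) => W q * φ (p₀ - τ • q))
      (F' := fun τ (q : ℝ × ℝ) => W q * -(fderiv ℝ φ (p₀ - τ • q) q))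
      (x₀ := τ₀) (bound := bd1) (s := Set.univ) Filter.univ_mem
      (Filter.Eventually.of_forall fun τ => hmeas0 τ) (hint0 τ₀) (hmeas1 τ₀)
      (Filter.Eventually.of_forall fun q τ _ => hbound1 q _) hbd1int
      (Filter.Eventually.of_forall fun q τ _ => ((hcurve0 q τ).const_mul (W q)))
    exact H.2
  have hG1deriv : HasDerivAt G1
      (∫ q : ℝ × ℝ, W q * (fderiv ℝ (fderiv ℝ φ) (p₀ - (0:ℝ) • q) q q)) 0 := by
    have H := hasDerivAt_integral_of_dominated_loc_of_deriv_le (μ := volume)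
      (F := fun τ (q : ℝ × ℝ) => W q * -(fderiv ℝ φ (p₀ - τ • q) q))
      (F' := fun τ (q : ℝ × ℝ) => W q * (fderiv ℝ (fderiv ℝ φ) (p₀ - τ • q) q q))
      (x₀ := 0) (bound := bd2) (s := Set.univ) Filter.univ_mem
      (Filter.Eventually.of_forall fun τ => hmeas1 τ) (hint1 0) (hmeas2 0)
      (Filter.Eventually.of_forall fun q τ _ => hbound2 q _) hbd2int
      (Filter.Eventually.of_forall fun q τ _ => ((hcurve1 q τ).const_mul (W q)))
    exact H.2
  -- value of G at 0
  have hG0 : G 0 = κP x y := by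
    have hpt : ∀ q : ℝ × ℝ, W q * φ (p₀ - (0:ℝ) • q) = K q.1 * (K q.2 * κP x y) := by
      intro q
      rw [zero_smul, sub_zero]
      have hv : φ p₀ = κP x y := rfl
      rw [hv]
      simp only [hWdef]
      ring
    have h1 : G 0 = ∫ q : ℝ × ℝ, K q.1 * (K q.2 * κP x y) := by
      simp only [hGdef]
      exact integral_congr_ae (Filter.Eventually.of_forall hpt)
    rw [h1, hprodEq K (fun a => K a * κP x y), hKnorm, integral_mul_const, hKnorm]
    ring
  -- value of G1 at 0
  have hG10 : G1 0 = 0 := by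
    have hpt : ∀ q : ℝ × ℝ, W q * -(fderiv ℝ φ (p₀ - (0:ℝ) • q) q)
        = (-(fderiv ℝ φ p₀ ((1:ℝ),(0:ℝ)))) * ((q.1 * K q.1) * K q.2)
          + (-(fderiv ℝ φ p₀ ((0:ℝ),(1:ℝ)))) * (K q.1 * (q.2 * K q.2)) := by
      intro q
      rw [zero_smul, sub_zero]
      have hq : q = q.1 • ((1:ℝ),(0:ℝ)) + q.2 • ((0:ℝ),(1:ℝ)) := by
        ext <;> simp
      have hlin : fderiv ℝ φ p₀ q
          = q.1 * fderiv ℝ φ p₀ ((1:ℝ),(0:ℝ)) + q.2 * fderiv ℝ φ p₀ ((0:ℝ),(1:ℝ)) := by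
        conv_lhs => rw [hq]
        simp only [map_add, _root_.map_smul, smul_eq_mul]
      rw [hlin]
      simp only [hWdef]
      ring
    have i1 : Integrable (fun q : ℝ × ℝ =>
        (-(fderiv ℝ φ p₀ ((1:ℝ),(0:ℝ)))) * ((q.1 * K q.1) * K q.2)) :=
      (hprodInt (fun a => a * K a) K hK1int hKint).const_mul _
    have i2 : Integrable (fun q : ℝ × ℝ =>
        (-(fderiv ℝ φ p₀ ((0:ℝ),(1:ℝ)))) * (K q.1 * (q.2 * K q.2))) :=
      (hprodInt K (fun a => a * K a) hKint hK1int).const_mul _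
    have h1 : G1 0 = ∫ q : ℝ × ℝ,
        ((-(fderiv ℝ φ p₀ ((1:ℝ),(0:ℝ)))) * ((q.1 * K q.1) * K q.2)
          + (-(fderiv ℝ φ p₀ ((0:ℝ),(1:ℝ)))) * (K q.1 * (q.2 * K q.2))) := by
      simp only [hG1def]
      exact integral_congr_ae (Filter.Eventually.of_forall hpt)
    have e1 : (∫ q : ℝ × ℝ, (q.1 * K q.1) * K q.2) = 0 := by
      have h := hprodEq (fun a => a * K a) K
      rw [hKodd] at h
      simpa using h
    have e2 : (∫ q : ℝ × ℝ, K q.1 * (q.2 * K q.2)) = 0 := by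
      have h := hprodEq K (fun a => a * K a)
      rw [hKodd] at h
      simpa using h
    rw [h1, integral_add i1 i2, integral_const_mul, integral_const_mul, e1, e2]
    ring
  -- value of the second derivative integral at 0
  have hbil : ∀ (T : (ℝ × ℝ) →L[ℝ] (ℝ × ℝ) →L[ℝ] ℝ) (q : ℝ × ℝ),
      T q q = q.1 * q.1 * T ((1:ℝ),(0:ℝ)) ((1:ℝ),(0:ℝ))
        + q.1 * q.2 * T ((1:ℝ),(0:ℝ)) ((0:ℝ),(1:ℝ))
        + q.2 * q.1 * T ((0:ℝ),(1:ℝ)) ((1:ℝ),(0:ℝ))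
        + q.2 * q.2 * T ((0:ℝ),(1:ℝ)) ((0:ℝ),(1:ℝ)) := by
    intro T q
    have hq : q = q.1 • ((1:ℝ),(0:ℝ)) + q.2 • ((0:ℝ),(1:ℝ)) := by
      ext <;> simp
    conv_lhs => rw [hq]
    simp only [map_add, _root_.map_smul, ContinuousLinearMap.add_apply,
      ContinuousLinearMap.smul_apply, smul_eq_mul]
    ring
  have hc2eq : (∫ q : ℝ × ℝ, W q * (fderiv ℝ (fderiv ℝ φ) (p₀ - (0:ℝ) • q) q q))
      = μ2 * (fderiv ℝ (fderiv ℝ φ) p₀ ((1:ℝ),(0:ℝ)) ((1:ℝ),(0:ℝ))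
        + fderiv ℝ (fderiv ℝ φ) p₀ ((0:ℝ),(1:ℝ)) ((0:ℝ),(1:ℝ))) := by
    set A11 := fderiv ℝ (fderiv ℝ φ) p₀ ((1:ℝ),(0:ℝ)) ((1:ℝ),(0:ℝ)) with hA11
    set A12 := fderiv ℝ (fderiv ℝ φ) p₀ ((1:ℝ),(0:ℝ)) ((0:ℝ),(1:ℝ)) with hA12
    set A21 := fderiv ℝ (fderiv ℝ φ) p₀ ((0:ℝ),(1:ℝ)) ((1:ℝ),(0:ℝ)) with hA21
    set A22 := fderiv ℝ (fderiv ℝ φ) p₀ ((0:ℝ),(1:ℝ)) ((0:ℝ),(1:ℝ)) with hA22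
    have hpt : ∀ q : ℝ × ℝ, W q * (fderiv ℝ (fderiv ℝ φ) (p₀ - (0:ℝ) • q) q q)
        = A11 * ((q.1 ^ 2 * K q.1) * K q.2)
          + ((A12 + A21) * ((q.1 * K q.1) * (q.2 * K q.2))
          + A22 * (K q.1 * (q.2 ^ 2 * K q.2))) := by
      intro q
      rw [zero_smul, sub_zero, hbil (fderiv ℝ (fderiv ℝ φ) p₀) q]
      simp only [hWdef, ← hA11, ← hA12, ← hA21, ← hA22]
      ring
    have i1 : Integrable (fun q : ℝ × ℝ => A11 * ((q.1 ^ 2 * K q.1) * K q.2)) :=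
      (hprodInt (fun a => a ^ 2 * K a) K hK2int hKint).const_mul _
    have i2 : Integrable (fun q : ℝ × ℝ =>
        (A12 + A21) * ((q.1 * K q.1) * (q.2 * K q.2))) :=
      (hprodInt (fun a => a * K a) (fun a => a * K a) hK1int hK1int).const_mul _
    have i3 : Integrable (fun q : ℝ × ℝ => A22 * (K q.1 * (q.2 ^ 2 * K q.2))) :=
      (hprodInt K (fun a => a ^ 2 * K a) hKint hK2int).const_mul _
    have e1 : (∫ q : ℝ × ℝ, (q.1 ^ 2 * K q.1) * K q.2) = μ2 := by
      have h := hprodEq (fun a => a ^ 2 * K a) K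
      rw [hKnorm, mul_one, ← hμ2] at h
      exact h
    have e2 : (∫ q : ℝ × ℝ, (q.1 * K q.1) * (q.2 * K q.2)) = 0 := by
      have h := hprodEq (fun a => a * K a) (fun a => a * K a)
      rw [hKodd] at h
      simpa using h
    have e3 : (∫ q : ℝ × ℝ, K q.1 * (q.2 ^ 2 * K q.2)) = μ2 := by
      have h := hprodEq K (fun a => a ^ 2 * K a)
      rw [hKnorm, one_mul, ← hμ2] at h
      exact h
    have h1 : (∫ q : ℝ × ℝ, W q * (fderiv ℝ (fderiv ℝ φ) (p₀ - (0:ℝ) • q) q q))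
        = ∫ q : ℝ × ℝ, (A11 * ((q.1 ^ 2 * K q.1) * K q.2)
          + ((A12 + A21) * ((q.1 * K q.1) * (q.2 * K q.2))
          + A22 * (K q.1 * (q.2 ^ 2 * K q.2)))) :=
      integral_congr_ae (Filter.Eventually.of_forall hpt)
    have h2 : (∫ q : ℝ × ℝ, (A11 * ((q.1 ^ 2 * K q.1) * K q.2)
          + ((A12 + A21) * ((q.1 * K q.1) * (q.2 * K q.2))
          + A22 * (K q.1 * (q.2 ^ 2 * K q.2)))))
        = (∫ q : ℝ × ℝ, A11 * ((q.1 ^ 2 * K q.1) * K q.2))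
          + ∫ q : ℝ × ℝ, ((A12 + A21) * ((q.1 * K q.1) * (q.2 * K q.2))
            + A22 * (K q.1 * (q.2 ^ 2 * K q.2))) := integral_add i1 (i2.add i3)
    have h3 : (∫ q : ℝ × ℝ, ((A12 + A21) * ((q.1 * K q.1) * (q.2 * K q.2))
            + A22 * (K q.1 * (q.2 ^ 2 * K q.2))))
        = (∫ q : ℝ × ℝ, (A12 + A21) * ((q.1 * K q.1) * (q.2 * K q.2)))
          + ∫ q : ℝ × ℝ, A22 * (K q.1 * (q.2 ^ 2 * K q.2)) := integral_add i2 i3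
    rw [h1, h2, h3, integral_const_mul, integral_const_mul, integral_const_mul, e1, e2, e3]
    ring
  -- identify iterated 1D derivatives with second fderiv entries
  have hι1 : ∀ s : ℝ, HasDerivAt (fun s' : ℝ => ((s', y) : ℝ × ℝ)) ((1:ℝ), (0:ℝ)) s := by
    intro s
    exact (hasDerivAt_id s).prodMk (hasDerivAt_const s y)
  have hι2 : ∀ t : ℝ, HasDerivAt (fun t' : ℝ => ((x, t') : ℝ × ℝ)) ((0:ℝ), (1:ℝ)) t := by
    intro t
    exact (hasDerivAt_const t x).prodMk (hasDerivAt_id t)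
  have hd1 : ∀ s : ℝ, HasDerivAt (fun s' => φ (s', y)) (fderiv ℝ φ (s, y) ((1:ℝ),(0:ℝ))) s := by
    intro s
    simpa [Function.comp_def] using (hφd (s, y)).hasFDerivAt.comp_hasDerivAt s (hι1 s)
  have hd2 : ∀ t : ℝ, HasDerivAt (fun t' => φ (x, t')) (fderiv ℝ φ (x, t) ((0:ℝ),(1:ℝ))) t := by
    intro t
    simpa [Function.comp_def] using (hφd (x, t)).hasFDerivAt.comp_hasDerivAt t (hι2 t)
  have hA11d : deriv (deriv fun s => κP s y) x
      = fderiv ℝ (fderiv ℝ φ) p₀ ((1:ℝ),(0:ℝ)) ((1:ℝ),(0:ℝ)) := by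
    have hder : (deriv fun s => κP s y) = fun s => fderiv ℝ φ (s, y) ((1:ℝ),(0:ℝ)) :=
      funext fun s => (hd1 s).deriv
    rw [hder]
    have h2 := (hDφd (x, y)).hasFDerivAt.comp_hasDerivAt x (hι1 x)
    have h3 := h2.clm_apply (hasDerivAt_const x ((1:ℝ),(0:ℝ)))
    have h4 : HasDerivAt (fun s => fderiv ℝ φ (s, y) ((1:ℝ),(0:ℝ)))
        (fderiv ℝ (fderiv ℝ φ) ((x : ℝ), y) ((1:ℝ),(0:ℝ)) ((1:ℝ),(0:ℝ))) x := by
      simpa using h3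
    rw [hp₀def]
    exact h4.deriv
  have hA22d : deriv (deriv fun t => κP x t) y
      = fderiv ℝ (fderiv ℝ φ) p₀ ((0:ℝ),(1:ℝ)) ((0:ℝ),(1:ℝ)) := by
    have hder : (deriv fun t => κP x t) = fun t => fderiv ℝ φ (x, t) ((0:ℝ),(1:ℝ)) :=
      funext fun t => (hd2 t).deriv
    rw [hder]
    have h2 := (hDφd (x, y)).hasFDerivAt.comp_hasDerivAt y (hι2 y)
    have h3 := h2.clm_apply (hasDerivAt_const y ((0:ℝ),(1:ℝ)))
    have h4 : HasDerivAt (fun t => fderiv ℝ φ (x, t) ((0:ℝ),(1:ℝ)))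
        (fderiv ℝ (fderiv ℝ φ) ((x : ℝ), y) ((0:ℝ),(1:ℝ)) ((0:ℝ),(1:ℝ))) y := by
      simpa using h3
    rw [hp₀def]
    exact h4.deriv
  -- change of variables
  have hCoV : ∀ τ : ℝ, 0 < τ →
      (∫ p : ℝ × ℝ, (1 / τ ^ 2 * K ((x - p.1) / τ) * K ((y - p.2) / τ)) * κP p.1 p.2)
        = G τ := by
    intro τ hτ
    have hτ0 : τ ≠ 0 := ne_of_gt hτ
    set f : ℝ × ℝ → ℝ :=
      fun p => (1 / τ ^ 2 * K ((x - p.1) / τ) * K ((y - p.2) / τ)) * κP p.1 p.2 with hfdef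
    have h1 : (∫ q : ℝ × ℝ, f (p₀ + (-τ) • q)) = (τ ^ 2)⁻¹ * ∫ p, f p := by
      have h := Measure.integral_comp_smul (μ := volume) (fun w => f (p₀ + w)) (-τ)
      rw [integral_add_left_eq_self f p₀] at h
      have e : |((-τ) ^ Module.finrank ℝ (ℝ × ℝ))⁻¹| = (τ ^ 2)⁻¹ := by
        rw [show Module.finrank ℝ (ℝ × ℝ) = 2 by
          simp [Module.finrank_prod]]
        rw [neg_pow, abs_inv]
        simp [abs_of_pos (pow_pos hτ 2)]
      rw [e] at h
      simpa [smul_eq_mul] using h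
    have h2 : ∀ q : ℝ × ℝ, f (p₀ + (-τ) • q) = (τ ^ 2)⁻¹ * (W q * φ (p₀ - τ • q)) := by
      intro q
      have hvec : p₀ + (-τ) • q = (x - τ * q.1, y - τ * q.2) := by
        ext <;> simp [hp₀def] <;> ring
      have hvec2 : p₀ - τ • q = (x - τ * q.1, y - τ * q.2) := by
        ext <;> simp [hp₀def] <;> ring
      rw [hvec, hvec2]
      have c1 : (x - (x - τ * q.1)) / τ = q.1 := by field_simp; ring
      have c2 : (y - (y - τ * q.2)) / τ = q.2 := by field_simp; ring
      simp only [hfdef]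
      rw [c1, c2]
      have hφv : φ (x - τ * q.1, y - τ * q.2) = κP (x - τ * q.1) (y - τ * q.2) := rfl
      rw [hφv]
      simp only [hWdef]
      rw [one_div]
      ring
    have h3 : (∫ q : ℝ × ℝ, f (p₀ + (-τ) • q)) = (τ ^ 2)⁻¹ * G τ := by
      rw [integral_congr_ae (Filter.Eventually.of_forall h2), integral_const_mul]
    have h4 : (τ ^ 2)⁻¹ * G τ = (τ ^ 2)⁻¹ * ∫ p, f p := by rw [← h3, h1]
    have h5 : G τ = ∫ p, f p :=
      mul_left_cancel₀ (inv_ne_zero (pow_ne_zero 2 hτ0)) h4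
    rw [← h5]
  -- identification with the empirical quantity via hid
  have hFω : ∀ τ : ℝ, 0 < τ →
      (∫ ω, ∑ j ∈ Finset.range (Kn ω),
          (d ω j - b ω j) * ((1 / τ ^ 2) * K ((x - b ω j) / τ) * K ((y - d ω j) / τ)))
        = G τ := by
    intro τ hτ
    have hτ2 : (0:ℝ) < τ ^ 2 := pow_pos hτ 2
    have hcont : Continuous (Function.uncurry
        fun s t => 1 / τ ^ 2 * K ((x - s) / τ) * K ((y - t) / τ)) := by
      apply Continuous.mul
      apply Continuous.mul continuous_const
      · exact hKc.comp ((continuous_const.sub continuous_fst).div_const τ)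
      · exact hKc.comp ((continuous_const.sub continuous_snd).div_const τ)
    have hbd : ∃ M, ∀ s t, |1 / τ ^ 2 * K ((x - s) / τ) * K ((y - t) / τ)| ≤ M := by
      refine ⟨1 / τ ^ 2 * MK * MK, fun s t => ?_⟩
      have hMKnn : 0 ≤ MK := le_trans (abs_nonneg _) (hMK 0)
      rw [abs_mul, abs_mul, abs_of_pos (by positivity : (0:ℝ) < 1 / τ ^ 2)]
      have := hMK ((x - s) / τ)
      have := hMK ((y - t) / τ)
      have h1 : 0 ≤ 1 / τ ^ 2 := le_of_lt (by positivity)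
      gcongr
    exact (hid (fun s t => 1 / τ ^ 2 * K ((x - s) / τ) * K ((y - t) / τ)) hcont hbd).trans
      (hCoV τ hτ)
  -- final assembly
  set c2 : ℝ := μ2 * (fderiv ℝ (fderiv ℝ φ) p₀ ((1:ℝ),(0:ℝ)) ((1:ℝ),(0:ℝ))
    + fderiv ℝ (fderiv ℝ φ) p₀ ((0:ℝ),(1:ℝ)) ((0:ℝ),(1:ℝ))) with hc2def
  have hG1d : HasDerivAt G1 c2 0 := by
    rw [← hc2eq]
    exact hG1deriv
  have ho : (fun t : ℝ => G1 t - t * c2) =o[𝓝 (0:ℝ)] fun t => t := by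
    have h := hasDerivAt_iff_isLittleO.mp hG1d
    simpa [hG10, smul_eq_mul] using h
  have key : (fun τ : ℝ => G τ - κP x y - c2 / 2 * τ ^ 2) =o[𝓝[>] (0:ℝ)]
      fun τ => τ ^ 2 := by
    rw [Asymptotics.isLittleO_iff]
    intro ε hε
    obtain ⟨δ, hδpos, hδ⟩ := Metric.eventually_nhds_iff.mp (ho.def hε)
    filter_upwards [Ioo_mem_nhdsGT_of_mem
      (show (0:ℝ) ∈ Ico (0:ℝ) δ from ⟨le_refl _, hδpos⟩)] with τ hτmem
    obtain ⟨hτ0, hτδ⟩ := hτmem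
    have hE : ∀ t : ℝ, HasDerivAt (fun u => G u - κP x y - c2 / 2 * u ^ 2)
        (G1 t - c2 * t) t := by
      intro t
      have h1 : HasDerivAt (fun u : ℝ => c2 / 2 * u ^ 2) (c2 * t) t := by
        have := (hasDerivAt_pow 2 t).const_mul (c2 / 2)
        refine this.congr_deriv ?_
        norm_num
        ring
      exact ((hGderiv t).sub_const (κP x y)).sub h1
    have hmvt := norm_image_sub_le_of_norm_deriv_le_segment'
      (f := fun u => G u - κP x y - c2 / 2 * u ^ 2) (f' := fun t => G1 t - c2 * t)
      (a := 0) (b := τ) (C := ε * τ)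
      (fun t _ => (hE t).hasDerivWithinAt)
      (fun t ht => ?_) τ ⟨le_of_lt hτ0, le_refl τ⟩
    · have hzero : G 0 - κP x y - c2 / 2 * (0:ℝ) ^ 2 = 0 := by
        rw [hG0]; ring
      have hmvt' : ‖G τ - κP x y - c2 / 2 * τ ^ 2 - (G 0 - κP x y - c2 / 2 * (0:ℝ) ^ 2)‖
          ≤ ε * τ * (τ - 0) := hmvt
      rw [hzero, sub_zero] at hmvt'
      calc ‖G τ - κP x y - c2 / 2 * τ ^ 2‖ ≤ ε * τ * (τ - 0) := hmvt'
        _ = ε * ‖τ ^ 2‖ := by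
            rw [Real.norm_eq_abs, abs_of_pos (pow_pos hτ0 2)]
            ring
    · obtain ⟨ht0, htτ⟩ := ht
      have hd : dist t 0 < δ := by
        rw [Real.dist_eq, sub_zero, abs_of_nonneg ht0]
        exact lt_trans htτ hτδ
      have := hδ hd
      calc ‖G1 t - c2 * t‖ = ‖G1 t - t * c2‖ := by rw [mul_comm]
        _ ≤ ε * ‖t‖ := this
        _ ≤ ε * τ := by
            rw [Real.norm_eq_abs, abs_of_nonneg ht0]
            exact mul_le_mul_of_nonneg_left (le_of_lt htτ) (le_of_lt hε)
  have hμc2 : μ2 / 2 * (deriv (deriv fun s => κP s y) x + deriv (deriv fun t => κP x t) y)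
      = c2 / 2 := by
    rw [hA11d, hA22d, hc2def]; ring
  refine key.congr' ?_ Filter.EventuallyEq.rfl
  filter_upwards [self_mem_nhdsWithin] with τ hτ
  rw [hμc2, hFω τ hτ]
end

section
/- Let $K$ be a continuous kernel and let two persistence diagrams $\mathcal{D} = \{(b_j,d_j)\}_{j=1}^m$ and $\mathcal{D}' = \{(b'_j,d'_j)\}_{j=1}^m$ have the same number of points, matched so that $|b_j - b'_j| \le \epsilon$ and $|d_j - d'_j| \le \epsilon$ for all $j$. If $K$ is Lipschitz with constant $L$ and bounded by $M$, and all lifetimes are bounded by $D$, then the smoothed intensities satisfy $\sup_{x,y} |\hat{\kappa}_\tau^{\mathcal{D}}(x,y) - \hat{\kappa}_\tau^{\mathcal{D}'}(x,y)| \le \frac{m}{\tau^2}\left(2M^2 \epsilon + \frac{2 D L M \epsilon}{\tau}\right)$. -/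
open Real

lemma abs_mul3_le {a b c A B C : ℝ} (ha : |a| ≤ A) (hb : |b| ≤ B) (hc : |c| ≤ C) :
    |a * b * c| ≤ A * B * C := by
  have hA := (abs_nonneg a).trans ha
  have hB := (abs_nonneg b).trans hb
  calc |a * b * c| = |a| * |b| * |c| := by rw [abs_mul, abs_mul]
    _ ≤ A * B * C :=
      mul_le_mul (mul_le_mul ha hb (abs_nonneg _) hA) hc (abs_nonneg _) (mul_nonneg hA hB)

/-- stability of the smoothed persistence intensity under an
`ε`-matching of diagrams. -/
theorem stmt_14 (m : ℕ) (b d b' d' : Fin m → ℝ) (K : ℝ → ℝ)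
    (L M D ε τ : ℝ) (hτ : 0 < τ) (hε : 0 ≤ ε)
    (hLip : ∀ s t, |K s - K t| ≤ L * |s - t|)
    (hM : ∀ s, |K s| ≤ M)
    (hb : ∀ j, |b j - b' j| ≤ ε) (hd : ∀ j, |d j - d' j| ≤ ε)
    (hlife : ∀ j, 0 ≤ d j - b j ∧ d j - b j ≤ D)
    (hlife' : ∀ j, 0 ≤ d' j - b' j ∧ d' j - b' j ≤ D) :
    ∀ x y : ℝ,
      |(∑ j, (d j - b j) * ((1 / τ ^ 2) * K ((x - b j) / τ) * K ((y - d j) / τ)))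
          - ∑ j, (d' j - b' j) * ((1 / τ ^ 2) * K ((x - b' j) / τ) * K ((y - d' j) / τ))|
        ≤ ((m : ℝ) / τ ^ 2) * (2 * M ^ 2 * ε + 2 * D * L * M * ε / τ) := by
  intro x y
  have hM0 : 0 ≤ M := (abs_nonneg _).trans (hM 0)
  have hL0 : 0 ≤ L := by
    have h := (abs_nonneg (K 0 - K 1)).trans (hLip 0 1)
    simpa using h
  rw [← Finset.sum_sub_distrib]
  have hterm : ∀ j : Fin m,
      |(d j - b j) * ((1 / τ ^ 2) * K ((x - b j) / τ) * K ((y - d j) / τ))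
        - (d' j - b' j) * ((1 / τ ^ 2) * K ((x - b' j) / τ) * K ((y - d' j) / τ))|
      ≤ (1 / τ ^ 2) * (2 * M ^ 2 * ε + 2 * D * L * M * ε / τ) := by
    intro j
    set w := d j - b j
    set w' := d' j - b' j
    set K1 := K ((x - b j) / τ)
    set K2 := K ((y - d j) / τ)
    set K1' := K ((x - b' j) / τ)
    set K2' := K ((y - d' j) / τ)
    have hw : |w - w'| ≤ 2 * ε := by
      have h1 := hb j; have h2 := hd j
      have : |w - w'| = |(d j - d' j) - (b j - b' j)| := by congr 1; simp only [w, w']; ring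
      rw [this]
      calc |(d j - d' j) - (b j - b' j)| ≤ |d j - d' j| + |b j - b' j| := abs_sub _ _
        _ ≤ 2 * ε := by linarith
    have hwD : |w'| ≤ D := by
      have h1 : 0 ≤ w' := (hlife' j).1
      have h2 : w' ≤ D := (hlife' j).2
      exact abs_le.mpr ⟨by linarith, h2⟩
    have hKd1 : |K1 - K1'| ≤ L * ε / τ := by
      calc |K1 - K1'| ≤ L * |(x - b j) / τ - (x - b' j) / τ| := hLip _ _
        _ = L * (|b' j - b j| / τ) := by
            rw [div_sub_div_same]
            congr 1
            rw [show x - b j - (x - b' j) = b' j - b j by ring, abs_div,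
              abs_of_pos hτ]
        _ ≤ L * (ε / τ) := by
            apply mul_le_mul_of_nonneg_left _ hL0
            apply div_le_div_of_nonneg_right _ hτ.le
            rw [abs_sub_comm]; exact hb j
        _ = L * ε / τ := by ring
    have hKd2 : |K2 - K2'| ≤ L * ε / τ := by
      calc |K2 - K2'| ≤ L * |(y - d j) / τ - (y - d' j) / τ| := hLip _ _
        _ = L * (|d' j - d j| / τ) := by
            rw [div_sub_div_same]
            congr 1
            rw [show y - d j - (y - d' j) = d' j - d j by ring, abs_div,
              abs_of_pos hτ]
        _ ≤ L * (ε / τ) := by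
            apply mul_le_mul_of_nonneg_left _ hL0
            apply div_le_div_of_nonneg_right _ hτ.le
            rw [abs_sub_comm]; exact hd j
        _ = L * ε / τ := by ring
    have e1 : |(w - w') * K1 * K2| ≤ 2 * ε * M * M :=
      abs_mul3_le hw (hM _) (hM _)
    have e2 : |w' * (K1 - K1') * K2| ≤ D * (L * ε / τ) * M :=
      abs_mul3_le hwD hKd1 (hM _)
    have e3 : |w' * K1' * (K2 - K2')| ≤ D * M * (L * ε / τ) :=
      abs_mul3_le hwD (hM _) hKd2
    have key : w * ((1 / τ ^ 2) * K1 * K2) - w' * ((1 / τ ^ 2) * K1' * K2')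
        = (1 / τ ^ 2) * ((w - w') * K1 * K2 + w' * (K1 - K1') * K2
            + w' * K1' * (K2 - K2')) := by ring
    rw [key, abs_mul, abs_of_pos (by positivity : (0:ℝ) < 1 / τ ^ 2)]
    apply mul_le_mul_of_nonneg_left _ (by positivity : (0:ℝ) ≤ 1 / τ ^ 2)
    calc |(w - w') * K1 * K2 + w' * (K1 - K1') * K2 + w' * K1' * (K2 - K2')|
        ≤ |(w - w') * K1 * K2| + |w' * (K1 - K1') * K2| + |w' * K1' * (K2 - K2')| :=
          (abs_add_le _ _).trans (by gcongr; exact abs_add_le _ _)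
      _ ≤ 2 * ε * M * M + D * (L * ε / τ) * M + D * M * (L * ε / τ) := by
          linarith
      _ = 2 * M ^ 2 * ε + 2 * D * L * M * ε / τ := by ring
  calc |∑ j, ((d j - b j) * ((1 / τ ^ 2) * K ((x - b j) / τ) * K ((y - d j) / τ))
          - (d' j - b' j) * ((1 / τ ^ 2) * K ((x - b' j) / τ) * K ((y - d' j) / τ)))|
      ≤ ∑ j, |(d j - b j) * ((1 / τ ^ 2) * K ((x - b j) / τ) * K ((y - d j) / τ))
          - (d' j - b' j) * ((1 / τ ^ 2) * K ((x - b' j) / τ) * K ((y - d' j) / τ))| :=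
        Finset.abs_sum_le_sum_abs _ _
    _ ≤ ∑ _j : Fin m, (1 / τ ^ 2) * (2 * M ^ 2 * ε + 2 * D * L * M * ε / τ) :=
        Finset.sum_le_sum fun j _ => hterm j
    _ = ((m : ℝ) / τ ^ 2) * (2 * M ^ 2 * ε + 2 * D * L * M * ε / τ) := by
        simp [Finset.sum_const, Finset.card_univ]
        ring
end
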